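/- Let Σ be a real positive semidefinite symmetric matrix indexed by N, let i, j ∈ N be distinct, and K ⊆ N \ {i,j}. If L ⊆ K satisfies det Σ_L ≠ 0 and rank Σ_L = rank Σ_K, and L' ⊆ K also satisfies det Σ_{L'} ≠ 0 and rank Σ_{L'} = rank Σ_K, then det Σ_{iL,jL} = 0 if and only if det Σ_{iL',jL'} = 0. -/

import Mathlib

open Matrix

namespace PsdCiAux

variable {N : Type*} [Fintype N] [DecidableEq N]

/-- explicit equivalence between `Option S` and `Unit ⊕ S`. -/
def optEquiv (S : Type*) : Option S ≃ (Unit ⊕ S) where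
  toFun o := o.elim (Sum.inl ()) Sum.inr
  invFun x := x.elim (fun _ => none) some
  left_inv o := by cases o <;> rfl
  right_inv x := by cases x <;> rfl

/-- Schur expansion of the almost-principal minor. -/
lemma det_option (A : Matrix N N ℝ) (i j : N) (S : Finset N)
    (h : (A.submatrix ((↑) : S → N) ((↑) : S → N)).det ≠ 0) :
    (A.submatrix (fun o : Option S => o.elim i (↑·))
        (fun o : Option S => o.elim j (↑·))).det
    = (A.submatrix ((↑) : S → N) ((↑) : S → N)).det *
      (A i j - (fun l : S => A i (↑l)) ⬝ᵥ
        ((A.submatrix ((↑) : S → N) ((↑) : S → N))⁻¹ *ᵥ (fun l : S => A (↑l) j))) := by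
  set D : Matrix S S ℝ := A.submatrix ((↑) : S → N) ((↑) : S → N) with hD
  haveI : Invertible D := D.invertibleOfIsUnitDet (isUnit_iff_ne_zero.2 h)
  set a : Matrix Unit Unit ℝ := Matrix.of fun _ _ => A i j with ha
  set b : Matrix Unit S ℝ := Matrix.of fun _ l => A i (↑l) with hb
  set c : Matrix S Unit ℝ := Matrix.of fun l _ => A (↑l) j with hc
  have key : A.submatrix (fun o : Option S => o.elim i (↑·))
        (fun o : Option S => o.elim j (↑·))
      = (Matrix.fromBlocks a b c D).submatrix (optEquiv S) (optEquiv S) := by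
    ext o o'
    cases o <;> cases o' <;> rfl
  rw [key, det_submatrix_equiv_self, Matrix.det_fromBlocks₂₂, invOf_eq_nonsing_inv]
  congr 1
  rw [det_unique]
  simp only [Matrix.sub_apply, ha, of_apply]
  congr 1
  simp only [Matrix.mul_apply, dotProduct, Matrix.mulVec, hb, hc, of_apply, dotProduct,
    Finset.sum_mul, Finset.mul_sum]
  rw [Finset.sum_comm]
  apply Finset.sum_congr rfl
  intro l _
  apply Finset.sum_congr rfl
  intro l' _
  ring

/-- The Schur-complement value `A i j - Aᵢₗ (A_L)⁻¹ A_{Lj}` equals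
`A i j - bᵢ ⬝ᵥ p` where `p` is the projection of `bⱼ` onto the span of
columns of `B` indexed by `L`. -/
theorem schur_invariant (A : Matrix N N ℝ) (hA : A.PosSemidef) (i j : N)
    (K L L' : Finset N) (hLK : L ⊆ K) (hLK' : L' ⊆ K)
    (hdetL : (A.submatrix ((↑) : L → N) ((↑) : L → N)).det ≠ 0)
    (hdetL' : (A.submatrix ((↑) : L' → N) ((↑) : L' → N)).det ≠ 0)
    (hrkL : (A.submatrix ((↑) : L → N) ((↑) : L → N)).rank
          = (A.submatrix ((↑) : K → N) ((↑) : K → N)).rank)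
    (hrkL' : (A.submatrix ((↑) : L' → N) ((↑) : L' → N)).rank
           = (A.submatrix ((↑) : K → N) ((↑) : K → N)).rank) :
    (fun l : L => A i (↑l)) ⬝ᵥ
        ((A.submatrix ((↑) : L → N) ((↑) : L → N))⁻¹ *ᵥ (fun l : L => A (↑l) j))
    = (fun l : L' => A i (↑l)) ⬝ᵥ
        ((A.submatrix ((↑) : L' → N) ((↑) : L' → N))⁻¹ *ᵥ (fun l : L' => A (↑l) j)) := by
  obtain ⟨B, hB⟩ : ∃ B : Matrix N N ℝ, A = Bᴴ * B := by
    open scoped MatrixOrder in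
    exact CStarAlgebra.nonneg_iff_eq_star_mul_self.mp hA.nonneg
  have hBe : ∀ m n : N, A m n = (fun k => B k m) ⬝ᵥ (fun k => B k n) := by
    intro m n
    rw [hB]
    simp [Matrix.mul_apply, dotProduct, conjTranspose_apply]
  -- columns submatrices
  set C : (S : Finset N) → Matrix N S ℝ := fun S => B.submatrix id ((↑) : S → N) with hC
  have hgram : ∀ S : Finset N,
      A.submatrix ((↑) : S → N) ((↑) : S → N) = (C S)ᵀ * (C S) := by
    intro S
    ext l l'
    simp [hBe, Matrix.mul_apply, dotProduct, hC]
  -- span of columns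
  set V : (S : Finset N) → Submodule ℝ (N → ℝ) :=
    fun S => Submodule.span ℝ (Set.range (C S)ᵀ) with hV
  have hrank : ∀ S : Finset N,
      (A.submatrix ((↑) : S → N) ((↑) : S → N)).rank
        = Module.finrank ℝ (V S) := by
    intro S
    rw [hgram S, Matrix.rank_transpose_mul_self, Matrix.rank_eq_finrank_span_cols]
    rfl
  have hle : ∀ (S T : Finset N), S ⊆ T → V S ≤ V T := by
    intro S T hST
    rw [hV, Submodule.span_le]
    rintro _ ⟨l, rfl⟩
    exact Submodule.subset_span ⟨⟨(l : N), hST l.2⟩, rfl⟩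
  have hVeq : ∀ S : Finset N, S ⊆ K →
      (A.submatrix ((↑) : S → N) ((↑) : S → N)).rank
        = (A.submatrix ((↑) : K → N) ((↑) : K → N)).rank → V S = V K := by
    intro S hSK hrk
    refine Submodule.eq_of_le_of_finrank_eq (hle S K hSK) ?_
    rw [← hrank S, ← hrank K, hrk]
  -- projections
  have main : ∀ S : Finset N, S ⊆ K →
      (A.submatrix ((↑) : S → N) ((↑) : S → N)).det ≠ 0 →
      (A.submatrix ((↑) : S → N) ((↑) : S → N)).rank
        = (A.submatrix ((↑) : K → N) ((↑) : K → N)).rank →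
      ∃ p : N → ℝ, p ∈ V K ∧ (∀ v ∈ V K, ((fun k => B k j) - p) ⬝ᵥ v = 0) ∧
        (fun l : S => A i (↑l)) ⬝ᵥ
          ((A.submatrix ((↑) : S → N) ((↑) : S → N))⁻¹ *ᵥ (fun l : S => A (↑l) j))
          = (fun k => B k i) ⬝ᵥ p := by
    intro S hSK hdet hrk
    set D := A.submatrix ((↑) : S → N) ((↑) : S → N) with hD
    set x : S → ℝ := D⁻¹ *ᵥ (fun l : S => A (↑l) j) with hx
    set p : N → ℝ := C S *ᵥ x with hp
    have hpmem : p ∈ V S := by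
      have : p = ∑ l : S, x l • (C S)ᵀ l := by
        ext n
        simp [hp, Matrix.mulVec, dotProduct, Finset.sum_apply, mul_comm]
      rw [this]
      exact Submodule.sum_mem _ fun l _ =>
        Submodule.smul_mem _ _ (Submodule.subset_span ⟨l, rfl⟩)
    have hCx : (C S)ᵀ *ᵥ p = fun l : S => A (↑l) j := by
      rw [hp, mulVec_mulVec, ← hgram S, ← hD, hx, mulVec_mulVec,
        Matrix.mul_nonsing_inv _ (isUnit_iff_ne_zero.2 hdet), one_mulVec]
    have hortho : ∀ v ∈ V S, ((fun k => B k j) - p) ⬝ᵥ v = 0 := by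
      intro v hv
      induction hv using Submodule.span_induction with
      | mem v hv =>
        obtain ⟨l, rfl⟩ := hv
        have h1 : ((fun k => B k j) - p) ⬝ᵥ (C S)ᵀ l
            = A (↑l) j - ((C S)ᵀ *ᵥ p) l := by
          simp only [sub_dotProduct, Matrix.mulVec, dotProduct, hBe, hC,
            Matrix.transpose_apply, Matrix.submatrix_apply, id, Pi.sub_apply,
            sub_mul, Finset.sum_sub_distrib]
          congr 1 <;> exact Finset.sum_congr rfl fun n _ => mul_comm _ _
        rw [h1, hCx]
        ring
      | zero => simp
      | add v w _ _ hv hw => rw [dotProduct_add, hv, hw, add_zero]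
      | smul a v _ hv => rw [dotProduct_smul, hv, smul_zero]
    have hval : (fun l : S => A i (↑l)) ⬝ᵥ x = (fun k => B k i) ⬝ᵥ p := by
      simp only [hp, dotProduct, Matrix.mulVec, hBe, hC, Matrix.submatrix_apply,
        Matrix.transpose_apply, Finset.mul_sum, Finset.sum_mul, id]
      rw [Finset.sum_comm]
      apply Finset.sum_congr rfl
      intro l _
      apply Finset.sum_congr rfl
      intro n _
      ring
    rw [hVeq S hSK hrk] at hpmem hortho
    exact ⟨p, hpmem, hortho, hval⟩
  obtain ⟨p, hpV, hpO, hpv⟩ := main L hLK hdetL hrkL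
  obtain ⟨p', hpV', hpO', hpv'⟩ := main L' hLK' hdetL' hrkL'
  have hpp : p = p' := by
    have hd : (p - p') ∈ V K := Submodule.sub_mem _ hpV hpV'
    have h0 : (p - p') ⬝ᵥ (p - p') = 0 := by
      calc (p - p') ⬝ᵥ (p - p')
          = ((fun k => B k j) - p') ⬝ᵥ (p - p')
            - ((fun k => B k j) - p) ⬝ᵥ (p - p') := by
            rw [← sub_dotProduct]; congr 1; ring
        _ = 0 := by rw [hpO' _ hd, hpO _ hd, sub_zero]
    exact sub_eq_zero.mp (dotProduct_self_eq_zero.mp h0)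
  rw [hpv, hpv', hpp]

end PsdCiAux

/-- well-definedness of conditional independence for positive
semidefinite matrices.  If `L, L' ⊆ K` both have invertible principal
submatrices whose rank equals that of `Σ_K`, then the almost-principal minors
`det Σ_{iL,jL}` and `det Σ_{iL',jL'}` vanish simultaneously. -/
theorem psd_ci_well_defined
    {N : Type*} [Fintype N] [DecidableEq N]
    (A : Matrix N N ℝ) (hA : A.PosSemidef)
    (i j : N) (hij : i ≠ j) (K : Finset N) (hiK : i ∉ K) (hjK : j ∉ K)
    (L L' : Finset N) (hL : L ⊆ K) (hL' : L' ⊆ K)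
    (hdetL : (A.submatrix ((↑) : L → N) ((↑) : L → N)).det ≠ 0)
    (hdetL' : (A.submatrix ((↑) : L' → N) ((↑) : L' → N)).det ≠ 0)
    (hrkL : (A.submatrix ((↑) : L → N) ((↑) : L → N)).rank
          = (A.submatrix ((↑) : K → N) ((↑) : K → N)).rank)
    (hrkL' : (A.submatrix ((↑) : L' → N) ((↑) : L' → N)).rank
           = (A.submatrix ((↑) : K → N) ((↑) : K → N)).rank) :
    ((A.submatrix (fun o : Option L => o.elim i (↑·))
        (fun o : Option L => o.elim j (↑·))).det = 0 ↔
     (A.submatrix (fun o : Option L' => o.elim i (↑·))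
        (fun o : Option L' => o.elim j (↑·))).det = 0) := by
  rw [PsdCiAux.det_option A i j L hdetL, PsdCiAux.det_option A i j L' hdetL',
    mul_eq_zero, mul_eq_zero,
    PsdCiAux.schur_invariant A hA i j K L L' hL hL' hdetL hdetL' hrkL hrkL']
  constructor
  · rintro (h | h)
    · exact absurd h hdetL
    · exact Or.inr h
  · rintro (h | h)
    · exact absurd h hdetL'
    · exact Or.inr h
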